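/- Let $S$ be a finite partially ordered set, let $R$ be a commutative ring, and let $x : S \to R$ be any function. Let $U(S)$ denote the set of nonempty antichains of $S$ (nonempty subsets in which no two elements are comparable), and for $I \subseteq S$ let $C(I)$ denote the set of elements of $S$ that are not less than or equal to any element of $I$. Then $\prod_{T \in S} (1 + x_T) = 1 + \sum_{I \in U(S)} (-1)^{|I|+1} \prod_{T \in I} x_T \prod_{T \in C(I)} (1 + x_T)$. -/

import Mathlib

open Finset

open scoped Classical in
/-- Generalized inclusion-exclusion over a finite poset. -/
theorem generalized_inclusion_exclusion {S : Type*} [Fintype S] [PartialOrder S]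
    {R : Type*} [CommRing R] (x : S → R) :
    ∏ T : S, (1 + x T) =
      1 + ∑ I ∈ Finset.univ.filter
          (fun I : Finset S => I.Nonempty ∧ IsAntichain (· ≤ ·) (I : Set S)),
        (-1 : R) ^ (I.card + 1) * (∏ T ∈ I, x T) *
          ∏ T ∈ Finset.univ.filter (fun T : S => ∀ s ∈ I, ¬ T ≤ s), (1 + x T) := by
  classical
  set 𝒜 : Finset (Finset S) := univ.filter
      (fun I : Finset S => I.Nonempty ∧ IsAntichain (· ≤ ·) (I : Set S)) with h𝒜
  set C : Finset S → Finset S := fun I => univ.filter (fun T : S => ∀ s ∈ I, ¬ T ≤ s) with hC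
  set Mn : Finset S → Finset S := fun A => A.filter (fun a => ∀ b ∈ A, b ≤ a → b = a) with hMn
  set P : Finset (Finset S) := (univ : Finset S).powerset.filter (·.Nonempty) with hP
  have expand : ∀ s : Finset S, ∏ T ∈ s, (1 + x T) = ∑ B ∈ s.powerset, ∏ T ∈ B, x T := by
    intro s
    have : ∀ T : S, (1 : R) + x T = x T + 1 := fun T => add_comm _ _
    simp_rw [this, Finset.prod_add, Finset.prod_const_one, mul_one]
  have key : (∑ I ∈ 𝒜, (-1 : R) ^ (I.card + 1) * (∏ T ∈ I, x T) *
        ∏ T ∈ C I, (1 + x T)) = ∑ A ∈ P, ∏ T ∈ A, x T := by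
    have step1 : (∑ I ∈ 𝒜, (-1 : R) ^ (I.card + 1) * (∏ T ∈ I, x T) *
          ∏ T ∈ C I, (1 + x T))
        = ∑ p ∈ 𝒜.sigma (fun I => (C I).powerset),
            (-1 : R) ^ (p.1.card + 1) * ∏ T ∈ p.1 ∪ p.2, x T := by
      rw [Finset.sum_sigma]
      refine Finset.sum_congr rfl fun I hI => ?_
      rw [expand (C I), Finset.mul_sum]
      refine Finset.sum_congr rfl fun B hB => ?_
      have hdisj : Disjoint I B := by
        rw [Finset.mem_powerset] at hB
        refine Finset.disjoint_left.mpr fun a haI haB => ?_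
        have := hB haB
        rw [hC] at this
        simp only [Finset.mem_filter] at this
        exact this.2 a haI le_rfl
      rw [Finset.prod_union hdisj, mul_assoc]
    have step2 : (∑ p ∈ 𝒜.sigma (fun I => (C I).powerset),
            (-1 : R) ^ (p.1.card + 1) * ∏ T ∈ p.1 ∪ p.2, x T)
        = ∑ q ∈ P.sigma (fun A => (Mn A).powerset.erase ∅),
            (-1 : R) ^ (q.2.card + 1) * ∏ T ∈ q.1, x T := by
      refine Finset.sum_nbij' (fun p => ⟨p.1 ∪ p.2, p.1⟩) (fun q => ⟨q.2, q.1 \ q.2⟩)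
        ?_ ?_ ?_ ?_ ?_
      · rintro ⟨I, B⟩ hp
        simp only [Finset.mem_sigma, Finset.mem_powerset] at hp
        obtain ⟨hI, hB⟩ := hp
        rw [h𝒜] at hI
        simp only [Finset.mem_filter, Finset.mem_univ, true_and] at hI
        obtain ⟨hIne, hIac⟩ := hI
        have hBC : ∀ b ∈ B, ∀ s ∈ I, ¬ b ≤ s := by
          intro b hb s hs
          have := hB hb
          rw [hC] at this
          simp only [Finset.mem_filter] at this
          exact this.2 s hs
        simp only [Finset.mem_sigma, Finset.mem_erase, Finset.mem_powerset, hP, hMn,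
          Finset.mem_filter, Finset.mem_powerset]
        refine ⟨⟨Finset.subset_univ _, hIne.mono Finset.subset_union_left⟩,
          Finset.nonempty_iff_ne_empty.mp hIne, fun a ha => ?_⟩
        simp only [Finset.mem_filter, Finset.mem_union]
        refine ⟨Or.inl ha, fun b hb hba => ?_⟩
        rcases hb with hbI | hbB
        · by_contra hne
          exact hIac (by exact_mod_cast hbI) (by exact_mod_cast ha) hne hba
        · exact absurd hba (hBC b hbB a ha)
      · rintro ⟨A, I⟩ hq
        simp only [Finset.mem_sigma, Finset.mem_erase, Finset.mem_powerset, hP,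
          Finset.mem_filter, Finset.mem_powerset] at hq
        obtain ⟨⟨_, hAne⟩, hIne, hIM⟩ := hq
        have hIA : I ⊆ A := fun a ha => (Finset.mem_filter.mp (hIM ha)).1
        have hImin : ∀ a ∈ I, ∀ b ∈ A, b ≤ a → b = a := by
          intro a ha b hb hba
          exact (Finset.mem_filter.mp (hIM ha)).2 b hb hba
        simp only [Finset.mem_sigma, Finset.mem_powerset, h𝒜, Finset.mem_filter,
          Finset.mem_univ, true_and]
        refine ⟨⟨Finset.nonempty_iff_ne_empty.mpr hIne, ?_⟩, ?_⟩
        · intro a ha b hb hab hle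
          exact hab (hImin b (Finset.mem_coe.mp hb) a (hIA (Finset.mem_coe.mp ha)) hle)
        · intro b hb
          rw [hC]
          simp only [Finset.mem_filter, Finset.mem_univ, true_and]
          intro s hs hbs
          rcases Finset.mem_sdiff.mp hb with ⟨hbA, hbI⟩
          exact hbI (by rw [hImin s hs b hbA hbs]; exact hs)
      · rintro ⟨I, B⟩ hp
        simp only [Finset.mem_sigma, Finset.mem_powerset] at hp
        have hdisj : Disjoint I B := by
          refine Finset.disjoint_left.mpr fun a haI haB => ?_
          have := hp.2 haB
          rw [hC] at this
          simp only [Finset.mem_filter] at this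
          exact this.2 a haI le_rfl
        simp [Finset.union_sdiff_cancel_left hdisj]
      · rintro ⟨A, I⟩ hq
        simp only [Finset.mem_sigma, Finset.mem_erase, Finset.mem_powerset, hP,
          Finset.mem_filter, Finset.mem_powerset] at hq
        have hIA : I ⊆ A := fun a ha => (Finset.mem_filter.mp (hq.2.2 ha)).1
        simp [Finset.union_sdiff_of_subset hIA]
      · rintro ⟨I, B⟩ hp
        rfl
    have step3 : (∑ q ∈ P.sigma (fun A => (Mn A).powerset.erase ∅),
            (-1 : R) ^ (q.2.card + 1) * ∏ T ∈ q.1, x T) = ∑ A ∈ P, ∏ T ∈ A, x T := by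
      rw [Finset.sum_sigma]
      refine Finset.sum_congr rfl fun A hA => ?_
      have hAne : A.Nonempty := (Finset.mem_filter.mp hA).2
      dsimp only
      have hMne : (Mn A).Nonempty := by
        obtain ⟨m, hm, hmin⟩ := Finset.exists_minimal hAne
        exact ⟨m, Finset.mem_filter.mpr ⟨hm, fun b hb hbm => by
          by_contra hne
          exact hne (le_antisymm hbm (hmin hb hbm))⟩⟩
      rw [← Finset.sum_mul]
      have hsum : (∑ I ∈ (Mn A).powerset.erase ∅, (-1 : R) ^ (I.card + 1)) = 1 := by
        have h0 : (∅ : Finset S) ∈ (Mn A).powerset := Finset.empty_mem_powerset _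
        have hZ := Finset.sum_powerset_neg_one_pow_card_of_nonempty hMne
        have hR : (∑ I ∈ (Mn A).powerset, (-1 : R) ^ I.card) = 0 := by
          have := congrArg (Int.cast : ℤ → R) hZ
          push_cast at this
          exact this
        rw [← Finset.add_sum_erase _ _ h0] at hR
        simp only [Finset.card_empty, pow_zero] at hR
        have h2 : (∑ I ∈ (Mn A).powerset.erase ∅, (-1 : R) ^ I.card) = -1 := by
          linear_combination hR
        calc (∑ I ∈ (Mn A).powerset.erase ∅, (-1 : R) ^ (I.card + 1))
            = ∑ I ∈ (Mn A).powerset.erase ∅, (-1 : R) ^ I.card * (-1) := by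
              refine Finset.sum_congr rfl fun I _ => ?_; ring
          _ = -1 * (-1) := by rw [← Finset.sum_mul, h2]
          _ = 1 := by ring
      rw [hsum, one_mul]
    rw [step1, step2, step3]
  rw [key, expand (univ : Finset S)]
  have hsplit : (univ : Finset S).powerset = insert ∅ P := by
    ext A
    simp only [Finset.mem_powerset, Finset.mem_insert, hP, Finset.mem_filter,
      Finset.mem_powerset, Finset.subset_univ, true_and, true_iff,
      Finset.nonempty_iff_ne_empty]
    tauto
  rw [hsplit, Finset.sum_insert (by simp [hP])]
  simp
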